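/- For every rank r ∈ {1,...,N} and every j ∈ {1,...,N}, the smooth rank indicator I_j^{r,α} converges as α → +∞ to the true rank indicator I_j^r, where I_j^r = 1 if j is the index of the r-th largest score and 0 otherwise. -/

import Mathlib

noncomputable def prodMask {N : ℕ} (S : Fin N → ℝ) (α δ : ℝ) : ℕ → Fin N → ℝ
  | 0 => fun _ => 1
  | r + 1 => fun j =>
      prodMask S α δ r j *
        (1 - (Real.exp (α * S j * prodMask S α δ r j) /
              ∑ j', Real.exp (α * S j' * prodMask S α δ r j')) - δ)

/-- Smooth rank indicator `I_j^{r+1,α}` (the argument `r : ℕ` is the 0-indexed rank,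
so `smoothI S α δ 0 j` is the top-1 indicator `I_j^{1,α}`). -/
noncomputable def smoothI {N : ℕ} (S : Fin N → ℝ) (α δ : ℝ) (r : ℕ) (j : Fin N) : ℝ :=
  Real.exp (α * S j * prodMask S α δ r j) /
    ∑ j', Real.exp (α * S j' * prodMask S α δ r j')

/-- True rank indicator: `trueI S r j = 1` iff `S j` is the `(r+1)`-th largest score
(0-indexed rank `r`), i.e. exactly `r` scores are strictly larger than `S j`. -/
noncomputable def trueI {N : ℕ} (S : Fin N → ℝ) (r : ℕ) (j : Fin N) : ℝ :=
  if (Finset.univ.filter fun i => S j < S i).card = r then 1 else 0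

section Aux
open Filter Real Finset

lemma aux_mul_exp {c : ℝ} (hc : c < 0) :
    Tendsto (fun α : ℝ => α * Real.exp (c * α)) atTop (nhds 0) := by
  have h := (Real.tendsto_pow_mul_exp_neg_atTop_nhds_zero 1).comp
    (tendsto_id.const_mul_atTop (show (0:ℝ) < -c by linarith))
  have h2 := h.const_mul (-c)⁻¹
  rw [mul_zero] at h2
  refine h2.congr fun α => ?_
  simp only [Function.comp_apply, pow_one, id_eq, neg_mul, neg_neg]
  have hc' : -c ≠ 0 := by linarith
  field_simp
  rw [eq_comm, eq_div_iff hc.ne]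
  ring

lemma tendsto_of_mul_id {f : ℝ → ℝ}
    (h : Tendsto (fun α : ℝ => α * f α) atTop (nhds 0)) :
    Tendsto f atTop (nhds 0) := by
  have h2 := h.mul tendsto_inv_atTop_zero
  rw [mul_zero] at h2
  refine h2.congr' ?_
  filter_upwards [eventually_gt_atTop (0:ℝ)] with α hα
  field_simp

lemma softmax_key {N : ℕ} (a : Fin N → ℝ) (ε : Fin N → ℝ → ℝ)
    (hε : ∀ i, Tendsto (ε i) atTop (nhds 0))
    (js : Fin N) (hmax : ∀ i, i ≠ js → a i < a js) (j : Fin N) :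
    Tendsto (fun α : ℝ => α * (Real.exp (α * a j + ε j α) /
        (∑ i, Real.exp (α * a i + ε i α)) - (if j = js then 1 else 0)))
      atTop (nhds 0) := by
  set e : Fin N → ℝ → ℝ :=
    fun i α => Real.exp (α * (a i - a js) + (ε i α - ε js α)) with he
  set D : ℝ → ℝ := fun α => ∑ i, e i α with hDdef
  have hejs : ∀ α, e js α = 1 := by intro α; simp [he]
  have hDpos : ∀ α, 0 < D α := by
    intro α
    exact Finset.sum_pos (fun i _ => Real.exp_pos _) ⟨js, mem_univ js⟩
  have hsm : ∀ i α, Real.exp (α * a i + ε i α) =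
      e i α * Real.exp (α * a js + ε js α) := by
    intro i α
    rw [he, ← Real.exp_add]
    congr 1
    ring
  have hfrac : ∀ α, Real.exp (α * a j + ε j α) /
      (∑ i, Real.exp (α * a i + ε i α)) = e j α / D α := by
    intro α
    rw [hsm j α]
    have : (∑ i, Real.exp (α * a i + ε i α)) =
        D α * Real.exp (α * a js + ε js α) := by
      rw [hDdef]
      show _ = (∑ i, e i α) * Real.exp (α * a js + ε js α)
      rw [Finset.sum_mul]
      exact Finset.sum_congr rfl fun i _ => hsm i α
    rw [this, mul_div_mul_right _ _ (Real.exp_ne_zero _)]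
  have hi : ∀ i, i ≠ js → Tendsto (fun α : ℝ => α * e i α) atTop (nhds 0) := by
    intro i hij
    have hc : a i - a js < 0 := by linarith [hmax i hij]
    have h1 := aux_mul_exp hc
    have h2 : Tendsto (fun α : ℝ => Real.exp (ε i α - ε js α)) atTop (nhds 1) := by
      have hsub : Tendsto (fun α => ε i α - ε js α) atTop (nhds 0) := by
        simpa using (hε i).sub (hε js)
      have := (Real.continuous_exp.tendsto 0).comp hsub
      rwa [Real.exp_zero] at this
    have h3 := h1.mul h2
    rw [zero_mul] at h3
    refine h3.congr fun α => ?_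
    show α * Real.exp ((a i - a js) * α) * Real.exp (ε i α - ε js α)
        = α * Real.exp (α * (a i - a js) + (ε i α - ε js α))
    rw [Real.exp_add, mul_comm α (a i - a js)]
    ring
  have hDsplit : ∀ α, D α = (∑ i ∈ univ.erase js, e i α) + 1 := by
    intro α
    have h5 : (∑ i ∈ univ.erase js, e i α) + e js α = ∑ i, e i α :=
      Finset.sum_erase_add _ _ (mem_univ js)
    rw [hejs α] at h5
    rw [hDdef]
    show (∑ i, e i α) = _
    linarith
  have hD : Tendsto D atTop (nhds 1) := by
    have hsum : Tendsto (fun α => ∑ i ∈ univ.erase js, e i α) atTop (nhds 0) := by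
      have := tendsto_finset_sum (univ.erase js)
        (fun i hi' => tendsto_of_mul_id (hi i (Finset.ne_of_mem_erase hi')))
      simpa using this
    have h6 := hsum.add (tendsto_const_nhds (x := (1:ℝ)))
    rw [zero_add] at h6
    exact h6.congr fun α => (hDsplit α).symm
  by_cases hj : j = js
  · have hnum : Tendsto (fun α : ℝ => -∑ i ∈ univ.erase js, α * e i α) atTop (nhds 0) := by
      have := tendsto_finset_sum (univ.erase js)
        (fun i hi' => hi i (Finset.ne_of_mem_erase hi'))
      simpa using this.neg
    have h4 := hnum.div hD one_ne_zero
    rw [zero_div] at h4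
    refine h4.congr fun α => ?_
    show (-∑ i ∈ univ.erase js, α * e i α) / D α
        = α * (Real.exp (α * a j + ε j α) /
            (∑ i, Real.exp (α * a i + ε i α)) - if j = js then 1 else 0)
    rw [if_pos hj, hfrac α, hj, hejs α]
    have hsplit : (∑ i ∈ univ.erase js, e i α) = D α - 1 := by
      have := hDsplit α; linarith
    rw [← Finset.mul_sum, hsplit]
    rw [eq_comm, mul_sub, mul_one_div, mul_one, div_sub' (hDpos α).ne']
    congr 1
    ring
  · have h4 := (hi j hj).div hD one_ne_zero
    rw [zero_div] at h4
    refine h4.congr fun α => ?_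
    show (α * e j α) / D α
        = α * (Real.exp (α * a j + ε j α) /
            (∑ i, Real.exp (α * a i + ε i α)) - if j = js then 1 else 0)
    rw [if_neg hj, hfrac α, sub_zero, mul_div_assoc]

noncomputable def rk {N : ℕ} (S : Fin N → ℝ) (j : Fin N) : ℕ :=
  (Finset.univ.filter fun i => S j < S i).card

lemma trueI_eq {N : ℕ} (S : Fin N → ℝ) (r : ℕ) (j : Fin N) :
    trueI S r j = if rk S j = r then 1 else 0 := rfl

lemma rk_lt_rk {N : ℕ} {S : Fin N → ℝ} {a b : Fin N} (h : S a < S b) :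
    rk S b < rk S a := by
  apply Finset.card_lt_card
  have hsub : (univ.filter fun i => S b < S i) ⊆ (univ.filter fun i => S a < S i) := by
    intro i hi
    simp only [mem_filter, mem_univ, true_and] at hi ⊢
    linarith
  rw [Finset.ssubset_iff_of_subset hsub]
  exact ⟨b, by simp [h], by simp⟩

lemma rk_lt {N : ℕ} (S : Fin N → ℝ) (j : Fin N) : rk S j < N := by
  have hss : (univ.filter fun i => S j < S i) ⊂ univ := by
    rw [Finset.ssubset_univ_iff]
    intro heq
    have := heq ▸ mem_univ j
    simp only [mem_filter, mem_univ, true_and] at this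
    exact lt_irrefl _ this
  have := Finset.card_lt_card hss
  simpa [rk] using this

lemma rk_injective {N : ℕ} {S : Fin N → ℝ} (hinj : Function.Injective S) :
    Function.Injective (rk S) := by
  intro a b hab
  by_contra hne
  rcases lt_trichotomy (S a) (S b) with h | h | h
  · have := rk_lt_rk h; omega
  · exact hne (hinj h)
  · have := rk_lt_rk h; omega

lemma exists_rk {N : ℕ} {S : Fin N → ℝ} (hinj : Function.Injective S)
    {r : ℕ} (hr : r < N) : ∃ j, rk S j = r := by
  have hg : Function.Injective (fun j => (⟨rk S j, rk_lt S j⟩ : Fin N)) := by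
    intro a b hab
    exact rk_injective hinj (congrArg Fin.val hab)
  have hsurj := Finite.surjective_of_injective hg
  obtain ⟨j, hj⟩ := hsurj ⟨r, hr⟩
  exact ⟨j, congrArg Fin.val hj⟩

lemma S_lt_of_rk {N : ℕ} {S : Fin N → ℝ} (hinj : Function.Injective S)
    {a b : Fin N} (h : rk S b < rk S a) : S a < S b := by
  by_contra hle
  push_neg at hle
  rcases eq_or_lt_of_le hle with heq | hlt
  · rw [hinj heq.symm] at h; omega
  · have := rk_lt_rk hlt; omega

noncomputable def limMask {N : ℕ} (S : Fin N → ℝ) (δ : ℝ) : ℕ → Fin N → ℝ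
  | 0 => fun _ => 1
  | r + 1 => fun j => limMask S δ r j * (1 - trueI S r j - δ)

lemma limMask_eq {N : ℕ} (S : Fin N → ℝ) (δ : ℝ) (r : ℕ) (j : Fin N) :
    limMask S δ r j = if rk S j < r then -δ * (1-δ)^(r-1) else (1-δ)^r := by
  induction r with
  | zero => simp [limMask]
  | succ r ih =>
    have hstep : limMask S δ (r+1) j = limMask S δ r j * (1 - trueI S r j - δ) := rfl
    rw [hstep, ih, trueI_eq]
    by_cases h1 : rk S j < r
    · rw [if_pos h1, if_neg (by omega : ¬ rk S j = r), if_pos (by omega)]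
      have hr1 : r - 1 + 1 = r := by omega
      rw [Nat.add_sub_cancel]
      conv_rhs => rw [← hr1, pow_succ]
      ring
    · by_cases h2 : rk S j = r
      · rw [if_neg h1, if_pos h2, if_pos (by omega), Nat.add_sub_cancel]
        ring
      · rw [if_neg h1, if_neg h2, if_neg (by omega), pow_succ]
        ring

lemma smooth_step {N : ℕ} {S : Fin N → ℝ} (hpos : ∀ i, 0 < S i)
    (hinj : Function.Injective S) {δ : ℝ} (hδ : δ ∈ Set.Ioo (0:ℝ) 0.5) {r : ℕ} (hr : r < N)
    (hP : ∀ j, Tendsto (fun α : ℝ => α * (prodMask S α δ r j - limMask S δ r j)) atTop (nhds 0))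
    (j : Fin N) :
    Tendsto (fun α : ℝ => α * (smoothI S α δ r j - trueI S r j)) atTop (nhds 0) := by
  obtain ⟨js, hjs⟩ := exists_rk hinj hr
  have hδ0 := hδ.1
  have hδ5 : δ < 0.5 := hδ.2
  have h1δ : (0:ℝ) < 1 - δ := by norm_num at hδ5 ⊢; linarith
  set a : Fin N → ℝ := fun i => S i * limMask S δ r i with ha
  set ε : Fin N → ℝ → ℝ :=
    fun i α => S i * (α * (prodMask S α δ r i - limMask S δ r i)) with hε'
  have hε : ∀ i, Tendsto (ε i) atTop (nhds 0) := by
    intro i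
    have h := (hP i).const_mul (S i)
    rw [mul_zero] at h
    exact h
  have hmax : ∀ i, i ≠ js → a i < a js := by
    intro i hij
    have hjs' : a js = S js * (1-δ)^r := by
      simp only [ha]
      rw [limMask_eq, if_neg (by omega)]
    have hpow : (0:ℝ) < (1-δ)^r := pow_pos h1δ r
    by_cases hlt : rk S i < r
    · have hai : a i = S i * (-δ * (1-δ)^(r-1)) := by
        simp only [ha]
        rw [limMask_eq, if_pos hlt]
      rw [hai, hjs']
      have hpow1 : (0:ℝ) < (1-δ)^(r-1) := pow_pos h1δ _
      have hneg : S i * (-δ * (1-δ)^(r-1)) < 0 :=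
        mul_neg_of_pos_of_neg (hpos i) (mul_neg_of_neg_of_pos (by linarith) hpow1)
      have hposs : 0 < S js * (1-δ)^r := mul_pos (hpos js) hpow
      linarith
    · have hrk : r < rk S i := by
        rcases Nat.lt_or_ge r (rk S i) with h | h
        · exact h
        · have heq : rk S i = r := by omega
          exact absurd (rk_injective hinj (heq.trans hjs.symm)) hij
      have hSi : S i < S js := S_lt_of_rk hinj (by omega : rk S js < rk S i)
      have hai : a i = S i * (1-δ)^r := by
        simp only [ha]
        rw [limMask_eq, if_neg (by omega)]
      rw [hai, hjs']
      nlinarith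
  have hkey := softmax_key a ε hε js hmax j
  have harg : ∀ (α : ℝ) i, α * a i + ε i α = α * S i * prodMask S α δ r i := by
    intro α i
    simp only [ha, hε']
    ring
  have heq : ∀ α : ℝ, Real.exp (α * a j + ε j α) /
      (∑ i, Real.exp (α * a i + ε i α)) = smoothI S α δ r j := by
    intro α
    rw [smoothI]
    congr 1
    · rw [harg α j]
    · exact Finset.sum_congr rfl fun i _ => by rw [harg α i]
  have hind : (if j = js then (1:ℝ) else 0) = trueI S r j := by
    rw [trueI_eq]
    by_cases h : j = js
    · rw [if_pos h, if_pos (h ▸ hjs)]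
    · rw [if_neg h, if_neg fun hrk => h (rk_injective hinj (hrk.trans hjs.symm))]
  refine hkey.congr fun α => ?_
  rw [heq α, hind]

lemma mask_step {N : ℕ} {S : Fin N → ℝ} {δ : ℝ} {r : ℕ}
    (hP : ∀ j, Tendsto (fun α : ℝ => α * (prodMask S α δ r j - limMask S δ r j)) atTop (nhds 0))
    (hs : ∀ j, Tendsto (fun α : ℝ => α * (smoothI S α δ r j - trueI S r j)) atTop (nhds 0))
    (j : Fin N) :
    Tendsto (fun α : ℝ => α * (prodMask S α δ (r+1) j - limMask S δ (r+1) j))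
      atTop (nhds 0) := by
  have hg : Tendsto (fun α : ℝ => smoothI S α δ r j) atTop (nhds (trueI S r j)) := by
    have h0 := tendsto_of_mul_id (hs j)
    have h1 := h0.add (tendsto_const_nhds (x := trueI S r j))
    rw [zero_add] at h1
    exact h1.congr fun α => by ring
  have hfac : Tendsto (fun α : ℝ => 1 - smoothI S α δ r j - δ) atTop
      (nhds (1 - trueI S r j - δ)) :=
    ((tendsto_const_nhds (x := (1:ℝ))).sub hg).sub tendsto_const_nhds
  have h1 := (hP j).mul hfac
  rw [zero_mul] at h1
  have h2 : Tendsto (fun α : ℝ => limMask S δ r j *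
      -(α * (smoothI S α δ r j - trueI S r j))) atTop (nhds 0) := by
    simpa using ((hs j).neg).const_mul (limMask S δ r j)
  have h3 := h1.add h2
  rw [add_zero] at h3
  refine h3.congr fun α => ?_
  have hPs : prodMask S α δ (r+1) j
      = prodMask S α δ r j * (1 - smoothI S α δ r j - δ) := rfl
  have hMs : limMask S δ (r+1) j = limMask S δ r j * (1 - trueI S r j - δ) := rfl
  rw [hPs, hMs]
  ring

lemma main_ind {N : ℕ} (S : Fin N → ℝ) (hpos : ∀ i, 0 < S i)
    (hinj : Function.Injective S) (δ : ℝ) (hδ : δ ∈ Set.Ioo (0:ℝ) 0.5) :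
    ∀ r, r ≤ N → ∀ j, Tendsto (fun α : ℝ => α * (prodMask S α δ r j - limMask S δ r j))
      atTop (nhds 0) := by
  intro r
  induction r with
  | zero =>
    intro _ j
    refine (tendsto_const_nhds (x := (0:ℝ))).congr fun α => ?_
    show (0:ℝ) = α * ((1:ℝ) - 1)
    ring
  | succ r ih =>
    intro hr j
    exact mask_step (ih (by omega))
      (smooth_step hpos hinj hδ (by omega) (ih (by omega))) j

end Aux

/-- for every rank `r ∈ {1,…,N}` (here 0-indexed, `r < N`) and every
document `j`, the smooth rank indicator `I_j^{r,α}` converges to the true rank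
indicator `I_j^r` as `α → +∞`. -/
theorem smoothI_tendsto_trueI {N : ℕ} (S : Fin N → ℝ)
    (hpos : ∀ i, 0 < S i) (hinj : Function.Injective S)
    (δ : ℝ) (hδ : δ ∈ Set.Ioo (0 : ℝ) 0.5)
    (r : ℕ) (hr : r < N) (j : Fin N) :
    Filter.Tendsto (fun α : ℝ => smoothI S α δ r j) Filter.atTop
      (nhds (trueI S r j)) := by
  have hP := main_ind S hpos hinj δ hδ r hr.le
  have hs := smooth_step hpos hinj hδ hr hP j
  have h0 := tendsto_of_mul_id hs
  have h1 := h0.add (tendsto_const_nhds (x := trueI S r j))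
  rw [zero_add] at h1
  exact h1.congr fun α => by ring
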